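/- Let q ≥ 2 and r, s, t, u be integers with 0 ≤ s, t < q+1, r ≥ q³−q and u ≥ q³+q². Define Ω_{r,s,t,u} = {(i,j,k) ∈ ℤ³ : −r ≤ i, −s ≤ i + (q²+q)k < −s + (q²+q), −t ≤ qi + (q²+q)j + (q+1)k < −t + (q²+q), −u ≤ −q²i − (q³−q)j − (q³+q²−q−1)k}. Then #Ω_{r,s,t,u} = #Ω_{q³−q, s, t, q³+q²} + (r − (q³−q)) + (u − (q³+q²)). -/
import Mathlib

/-- The lattice point set Ω_{r,s,t,u}: (i,j,k) with −r ≤ i,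
    −s ≤ i+(q²+q)k < −s+(q²+q), −t ≤ qi+(q²+q)j+(q+1)k < −t+(q²+q),
    −u ≤ −q²i−(q³−q)j−(q³+q²−q−1)k. -/
def Omega (q r s t u : ℤ) : Set (ℤ × ℤ × ℤ) :=
  {p | -r ≤ p.1 ∧
       -s ≤ p.1 + (q ^ 2 + q) * p.2.2 ∧
       p.1 + (q ^ 2 + q) * p.2.2 < -s + (q ^ 2 + q) ∧
       -t ≤ q * p.1 + (q ^ 2 + q) * p.2.1 + (q + 1) * p.2.2 ∧
       q * p.1 + (q ^ 2 + q) * p.2.1 + (q + 1) * p.2.2 < -t + (q ^ 2 + q) ∧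
       -u ≤ -q ^ 2 * p.1 - (q ^ 3 - q) * p.2.1 - (q ^ 3 + q ^ 2 - q - 1) * p.2.2}

namespace Stmt9Aux

def kk (q s i : ℤ) : ℤ := -((i + s) / (q^2 + q))
def jj (q s t i : ℤ) : ℤ := -((q*i + (q+1) * kk q s i + t) / (q^2 + q))
def FF (q s t i : ℤ) : ℤ := -q^2*i - (q^3-q) * jj q s t i - (q^3+q^2-q-1) * kk q s i
def SS (q r s t u : ℤ) : Set ℤ := {i | -r ≤ i ∧ -u ≤ FF q s t i}

variable {q s t : ℤ}

lemma hM (hq : 2 ≤ q) : (0:ℤ) < q^2 + q := by nlinarith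

lemma hD (hq : 2 ≤ q) : (0:ℤ) < q^3+q^2 := by nlinarith

lemma zero_of_small {M Z : ℤ} (hM : 0 < M) (h1 : -M < M*Z) (h2 : M*Z < M) : Z = 0 := by
  have h3 : Z < 1 := by nlinarith
  have h4 : -1 < Z := by nlinarith
  omega

lemma kk_prop (hq : 2 ≤ q) (i : ℤ) :
    -s ≤ i + (q^2+q) * kk q s i ∧ i + (q^2+q) * kk q s i < -s + (q^2+q) := by
  have h1 := Int.emod_nonneg (i+s) (ne_of_gt (hM hq))
  have h2 := Int.emod_lt_of_pos (i+s) (hM hq)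
  have h3 := Int.mul_ediv_add_emod (i+s) (q^2+q)
  unfold kk
  constructor <;> linarith

lemma jj_prop (hq : 2 ≤ q) (i : ℤ) :
    -t ≤ q*i + (q^2+q) * jj q s t i + (q+1) * kk q s i ∧
    q*i + (q^2+q) * jj q s t i + (q+1) * kk q s i < -t + (q^2+q) := by
  have h1 := Int.emod_nonneg (q*i + (q+1) * kk q s i + t) (ne_of_gt (hM hq))
  have h2 := Int.emod_lt_of_pos (q*i + (q+1) * kk q s i + t) (hM hq)
  have h3 := Int.mul_ediv_add_emod (q*i + (q+1) * kk q s i + t) (q^2+q)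
  unfold jj
  constructor <;> linarith

lemma FF_eq (hq : 2 ≤ q) (i : ℤ) :
    FF q s t i = -i + (q-1) * (s + t - (i+s) % (q^2+q)
      - ((q*i + (q+1) * kk q s i + t) % (q^2+q))) := by
  have h3 := Int.mul_ediv_add_emod (i+s) (q^2+q)
  have h4 := Int.mul_ediv_add_emod (q*i + (q+1) * kk q s i + t) (q^2+q)
  unfold FF jj kk at *
  linear_combination (q-1) * h3 + (q-1) * h4

lemma FF_le (hq : 2 ≤ q) (hs1 : s < q+1) (ht1 : t < q+1) (i : ℤ) :
    FF q s t i ≤ -i + 2*q^2 := by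
  rw [FF_eq hq]
  have h1 := Int.emod_nonneg (i+s) (ne_of_gt (hM hq))
  have h2 := Int.emod_nonneg (q*i + (q+1) * kk q s i + t) (ne_of_gt (hM hq))
  nlinarith

lemma FF_low (hq : 2 ≤ q) (hs0 : 0 ≤ s) (ht0 : 0 ≤ t) {i : ℤ}
    (hi : i ≤ -(q^3-q) - 1) : -(q^3+q^2) ≤ FF q s t i := by
  rw [FF_eq hq]
  have h1 := Int.emod_lt_of_pos (i+s) (hM hq)
  have h2 := Int.emod_lt_of_pos (q*i + (q+1) * kk q s i + t) (hM hq)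
  nlinarith

lemma kk_shift (hq : 2 ≤ q) (i n : ℤ) :
    kk q s (i + (q^3+q^2)*n) = kk q s i - q*n := by
  have hM0 : (q^2+q) ≠ 0 := ne_of_gt (hM hq)
  unfold kk
  have : i + (q^3+q^2)*n + s = (i + s) + (q*n) * (q^2+q) := by ring
  rw [this, Int.add_mul_ediv_right _ _ hM0]
  ring

lemma jj_shift (hq : 2 ≤ q) (i n : ℤ) :
    jj q s t (i + (q^3+q^2)*n) = jj q s t i - (q^2-1)*n := by
  have hM0 : (q^2+q) ≠ 0 := ne_of_gt (hM hq)
  unfold jj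
  rw [kk_shift hq]
  have : q*(i + (q^3+q^2)*n) + (q+1) * (kk q s i - q*n) + t
      = (q*i + (q+1) * kk q s i + t) + ((q^2-1)*n) * (q^2+q) := by ring
  rw [this, Int.add_mul_ediv_right _ _ hM0]
  ring

lemma FF_shift (hq : 2 ≤ q) (i n : ℤ) :
    FF q s t (i + (q^3+q^2)*n) = FF q s t i - (q^3+q^2)*n := by
  unfold FF
  rw [kk_shift hq, jj_shift hq]
  ring

lemma key_arith (q s t N i i' a a' b b' c c' P P' m1 m1' w w' : ℤ)
    (hq : 2 ≤ q)
    (ha0 : 0 ≤ a) (ha1 : a < q^2+q) (ha0' : 0 ≤ a') (ha1' : a' < q^2+q)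
    (hb0 : 0 ≤ b) (hb1 : b < q^2+q) (hb0' : 0 ≤ b') (hb1' : b' < q^2+q)
    (hc0 : 0 ≤ c) (hc1 : c < q) (hc0' : 0 ≤ c') (hc1' : c' < q)
    (hi : i = (q^2+q)*P + a - s)
    (hi' : i' = (q^2+q)*P' + a' - s)
    (hP : P = q*m1 + c) (hP' : P' = q*m1' + c')
    (hb : b = q*a - (q+1)*c - q*s + t - (q^2+q)*w)
    (hb' : b' = q*a' - (q+1)*c' - q*s + t - (q^2+q)*w')
    (hF : (-i + (q-1)*(s+t-a-b)) - (-i' + (q-1)*(s+t-a'-b')) = (q^3+q^2)*N) :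
    (q^3+q^2) ∣ i - i' := by
  have hq0 : (0:ℤ) < q := by linarith
  have hq10 : (0:ℤ) < q + 1 := by linarith
  have hM0 : (0:ℤ) < q^2+q := by nlinarith
  have hA1 : (q-1)*(c-c') =
      q*((c-c') + (q+1)*(P-P') + q*(a-a') - q*(c-c') - (q^2-1)*(w-w') + (q^2+q)*N) := by
    linear_combination hF + hi - hi' + (q-1)*hb - (q-1)*hb'
  have hA2 : q ∣ (c - c') := by
    have h1 : q ∣ (q-1)*(c-c') := ⟨_, hA1⟩
    have h2 : q ∣ q*(c-c') := Dvd.intro _ rfl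
    have h3 := dvd_sub h2 h1
    have h4 : q*(c-c') - (q-1)*(c-c') = c - c' := by ring
    rwa [h4] at h3
  obtain ⟨e, he⟩ := hA2
  have he0 : e = 0 := zero_of_small hq0 (by linarith [he]) (by linarith [he])
  have hcc : c = c' := by rw [he0, mul_zero] at he; linarith
  have hB1 : q*((q+1)*(w'-w) + (b'-b)) = q*((q^2+q)*(N + m1 - m1')) := by
    linear_combination hF + hi - hi' - hb + hb' + (q^2+q)*hP - (q^2+q)*hP' + (q+1)^2*hcc
  have hB2 : (q+1)*(w'-w) + (b'-b) = (q^2+q)*(N + m1 - m1') :=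
    mul_left_cancel₀ (ne_of_gt hq0) hB1
  have hq1 : b'-b = q*((a'-a) - (q+1)*(w'-w)) := by
    linear_combination hb' - hb + (q+1)*hcc
  have hbB1 : b'-b = (q+1)*(q*(N+m1-m1') - (w'-w)) := by linear_combination hB2
  have hX : q*(N+m1-m1') - (w'-w)
      = q*(((a'-a) - (q+1)*(w'-w)) - (q*(N+m1-m1') - (w'-w))) := by
    linear_combination hq1 - hbB1
  have hbMB : b' - b = (q^2+q)*((((a'-a) - (q+1)*(w'-w)) - (q*(N+m1-m1') - (w'-w)))) := by
    linear_combination hbB1 + (q+1)*hX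
  have hE0 : (a'-a - (q+1)*(w'-w) - (q*(N+m1-m1') - (w'-w))) = 0 :=
    zero_of_small hM0 (by linarith) (by linarith)
  have hbb : b = b' := by rw [hE0, mul_zero] at hbMB; linarith
  have hw : w' - w = q*(N+m1-m1') :=
    mul_left_cancel₀ (ne_of_gt hq10) (by linear_combination hB2 - (by linarith [hbb] : b' - b = 0))
  have haM : a' - a = (q^2+q)*(N+m1-m1') :=
    mul_left_cancel₀ (ne_of_gt hq0)
      (by linear_combination -hq1 + (by linarith [hbb] : b' - b = 0) + (q*(q+1))*hw)
  have hZ0 : N+m1-m1' = 0 := zero_of_small hM0 (by linarith) (by linarith)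
  have haa : a = a' := by rw [hZ0, mul_zero] at haM; linarith
  exact ⟨m1 - m1', by
    linear_combination hi - hi' + (q^2+q)*hP - (q^2+q)*hP' + (q^2+q)*hcc + haa⟩

lemma FF_key (hq : 2 ≤ q) (i i' : ℤ) (h : (q^3+q^2) ∣ FF q s t i - FF q s t i') :
    (q^3+q^2) ∣ i - i' := by
  obtain ⟨N, hN⟩ := h
  have hM0 : (0:ℤ) < q^2+q := hM hq
  have hMne : (q^2+q) ≠ 0 := ne_of_gt hM0
  have hq0 : (0:ℤ) < q := by linarith
  have hqne : q ≠ 0 := ne_of_gt hq0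
  have HP := Int.mul_ediv_add_emod (i+s) (q^2+q)
  have HP' := Int.mul_ediv_add_emod (i'+s) (q^2+q)
  have Hm := Int.mul_ediv_add_emod ((i+s)/(q^2+q)) q
  have Hm' := Int.mul_ediv_add_emod ((i'+s)/(q^2+q)) q
  have HY := Int.mul_ediv_add_emod (q*i + (q+1)*kk q s i + t) (q^2+q)
  have HY' := Int.mul_ediv_add_emod (q*i' + (q+1)*kk q s i' + t) (q^2+q)
  have hkk : kk q s i = -((i+s)/(q^2+q)) := rfl
  have hkk' : kk q s i' = -((i'+s)/(q^2+q)) := rfl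
  have F1 := FF_eq (s := s) (t := t) hq i
  have F2 := FF_eq (s := s) (t := t) hq i'
  exact key_arith q s t N i i'
    ((i+s) % (q^2+q)) ((i'+s) % (q^2+q))
    ((q*i + (q+1)*kk q s i + t) % (q^2+q)) ((q*i' + (q+1)*kk q s i' + t) % (q^2+q))
    (((i+s)/(q^2+q)) % q) (((i'+s)/(q^2+q)) % q)
    ((i+s)/(q^2+q)) ((i'+s)/(q^2+q))
    (((i+s)/(q^2+q))/q) (((i'+s)/(q^2+q))/q)
    ((q*i + (q+1)*kk q s i + t)/(q^2+q) - q*((i+s)/(q^2+q)) + ((i+s)/(q^2+q))/q)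
    ((q*i' + (q+1)*kk q s i' + t)/(q^2+q) - q*((i'+s)/(q^2+q)) + ((i'+s)/(q^2+q))/q)
    hq
    (Int.emod_nonneg _ hMne) (Int.emod_lt_of_pos _ hM0)
    (Int.emod_nonneg _ hMne) (Int.emod_lt_of_pos _ hM0)
    (Int.emod_nonneg _ hMne) (Int.emod_lt_of_pos _ hM0)
    (Int.emod_nonneg _ hMne) (Int.emod_lt_of_pos _ hM0)
    (Int.emod_nonneg _ hqne) (Int.emod_lt_of_pos _ hq0)
    (Int.emod_nonneg _ hqne) (Int.emod_lt_of_pos _ hq0)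
    (by linarith [HP]) (by linarith [HP'])
    (by linarith [Hm]) (by linarith [Hm'])
    (by linear_combination HY - q*HP + (q+1)*Hm + (q+1)*hkk)
    (by linear_combination HY' - q*HP' + (q+1)*Hm' + (q+1)*hkk')
    (by linear_combination hN - F1 + F2)

lemma FF_injective (hq : 2 ≤ q) : Function.Injective (FF q s t) := by
  intro i i' h
  have hD0 := hD hq
  obtain ⟨n, hn⟩ := FF_key hq i i' (by rw [h, sub_self]; exact dvd_zero _)
  have hii : i = i' + (q^3+q^2)*n := by linarith
  rw [hii, FF_shift hq] at h
  have hn0 : n = 0 := zero_of_small hD0 (by linarith) (by linarith)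
  rw [hn0, mul_zero, add_zero] at hii
  exact hii

lemma FF_surjective (hq : 2 ≤ q) (v : ℤ) : ∃ i, FF q s t i = v := by
  have hD0 := hD hq
  have hDne : (q^3+q^2) ≠ 0 := ne_of_gt hD0
  have key : ∀ b ∈ Finset.Ico (0:ℤ) (q^3+q^2), ∃ a, ∃ _ : a ∈ Finset.Ico (0:ℤ) (q^3+q^2),
      b = (fun (i : ℤ) (_ : i ∈ Finset.Ico (0:ℤ) (q^3+q^2)) => FF q s t i % (q^3+q^2)) a ‹_› := by
    apply Finset.surj_on_of_inj_on_of_card_le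
    · intro a ha
      simp only [Finset.mem_Ico]
      exact ⟨Int.emod_nonneg _ hDne, Int.emod_lt_of_pos _ hD0⟩
    · intro a1 a2 ha1 ha2 heq
      simp only [Finset.mem_Ico] at ha1 ha2
      have hdvd : (q^3+q^2) ∣ FF q s t a1 - FF q s t a2 :=
        Int.dvd_of_emod_eq_zero (by rw [Int.sub_emod, heq, sub_self, Int.zero_emod])
      obtain ⟨n, hn⟩ := FF_key hq a1 a2 hdvd
      have : n = 0 := zero_of_small hD0 (by linarith) (by linarith)
      rw [this, mul_zero] at hn; linarith
    · exact le_refl _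
  obtain ⟨ρ, hρ, heq⟩ := key (v % (q^3+q^2))
    (by simp only [Finset.mem_Ico]; exact ⟨Int.emod_nonneg _ hDne, Int.emod_lt_of_pos _ hD0⟩)
  have heq' : v % (q^3+q^2) = FF q s t ρ % (q^3+q^2) := heq
  have hdvd : (q^3+q^2) ∣ FF q s t ρ - v := by
    apply Int.dvd_of_emod_eq_zero
    rw [Int.sub_emod, ← heq', sub_self, Int.zero_emod]
  obtain ⟨n, hn⟩ := hdvd
  refine ⟨ρ + (q^3+q^2)*n, ?_⟩
  rw [FF_shift hq]; linarith

lemma mem_omega (hq : 2 ≤ q) (r u : ℤ) (p : ℤ × ℤ × ℤ) :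
    p ∈ Omega q r s t u ↔
      p.1 ∈ SS q r s t u ∧ p.2.1 = jj q s t p.1 ∧ p.2.2 = kk q s p.1 := by
  have hM0 : (0:ℤ) < q^2+q := hM hq
  constructor
  · rintro ⟨h1, h2, h3, h4, h5, h6⟩
    obtain ⟨k1, k2⟩ := kk_prop (s := s) hq p.1
    have h7 : (q^2+q)*(p.2.2 - kk q s p.1)
        = (p.1 + (q^2+q)*p.2.2) - (p.1 + (q^2+q)*kk q s p.1) := by ring
    have hk : p.2.2 = kk q s p.1 := by
      have h8 : p.2.2 - kk q s p.1 = 0 :=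
        zero_of_small hM0 (by linarith [h7]) (by linarith [h7])
      linarith
    rw [hk] at h4 h5
    obtain ⟨j1, j2⟩ := jj_prop (s := s) (t := t) hq p.1
    have h9 : (q^2+q)*(p.2.1 - jj q s t p.1)
        = (q*p.1 + (q^2+q)*p.2.1 + (q+1)*kk q s p.1)
          - (q*p.1 + (q^2+q)*jj q s t p.1 + (q+1)*kk q s p.1) := by ring
    have hj : p.2.1 = jj q s t p.1 := by
      have h10 : p.2.1 - jj q s t p.1 = 0 :=
        zero_of_small hM0 (by linarith [h9]) (by linarith [h9])
      linarith
    refine ⟨⟨h1, ?_⟩, hj, hk⟩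
    unfold FF
    rw [← hj, ← hk]
    exact h6
  · rintro ⟨⟨h1, h6⟩, hj, hk⟩
    obtain ⟨k1, k2⟩ := kk_prop (s := s) hq p.1
    obtain ⟨j1, j2⟩ := jj_prop (s := s) (t := t) hq p.1
    rw [← hk] at k1 k2
    rw [← hj, ← hk] at j1 j2
    refine ⟨h1, k1, k2, j1, j2, ?_⟩
    unfold FF at h6
    rw [← hj, ← hk] at h6
    exact h6

lemma omega_eq_image (hq : 2 ≤ q) (r u : ℤ) :
    Omega q r s t u = (fun i => (i, jj q s t i, kk q s i)) '' SS q r s t u := by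
  ext p
  rw [mem_omega hq]
  constructor
  · rintro ⟨h1, hj, hk⟩
    refine ⟨p.1, h1, ?_⟩
    show (p.1, jj q s t p.1, kk q s p.1) = p
    rw [← hj, ← hk]
  · rintro ⟨i, hi, hp⟩
    rw [← hp]
    exact ⟨hi, rfl, rfl⟩

lemma SS_finite (hq : 2 ≤ q) (hs1 : s < q+1) (ht1 : t < q+1) (r u : ℤ) :
    (SS q r s t u).Finite := by
  apply Set.Finite.subset (Set.finite_Icc (-r) (u + 2*q^2))
  rintro i ⟨h1, h2⟩
  have := FF_le hq hs1 ht1 i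
  exact ⟨h1, by linarith⟩

lemma omega_ncard (hq : 2 ≤ q) (r u : ℤ) :
    (Omega q r s t u).ncard = (SS q r s t u).ncard := by
  rw [omega_eq_image hq]
  apply Set.ncard_image_of_injective
  intro a b h
  exact congrArg Prod.fst h

lemma step_r (hq : 2 ≤ q) (hs0 : 0 ≤ s) (hs1 : s < q+1) (ht0 : 0 ≤ t) (ht1 : t < q+1)
    {r u : ℤ} (hr : q^3 - q ≤ r) (hu : q^3 + q^2 ≤ u) :
    (SS q (r+1) s t u).ncard = (SS q r s t u).ncard + 1 := by
  have hins : SS q (r+1) s t u = insert (-(r+1)) (SS q r s t u) := by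
    ext i
    simp only [SS, Set.mem_setOf_eq, Set.mem_insert_iff]
    constructor
    · rintro ⟨h1, h2⟩
      rcases eq_or_lt_of_le h1 with h | h
      · exact Or.inl h.symm
      · exact Or.inr ⟨by omega, h2⟩
    · rintro (h | ⟨h1, h2⟩)
      · subst h
        exact ⟨le_refl _, by
          have := FF_low (s := s) (t := t) hq hs0 ht0 (i := -(r+1)) (by omega)
          linarith⟩
      · exact ⟨by omega, h2⟩
  rw [hins, Set.ncard_insert_of_notMem _ (SS_finite hq hs1 ht1 r u)]
  rintro ⟨h1, _⟩
  omega

lemma step_u (hq : 2 ≤ q) (hs0 : 0 ≤ s) (hs1 : s < q+1) (ht0 : 0 ≤ t) (ht1 : t < q+1)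
    {u : ℤ} (hu : q^3 + q^2 ≤ u) :
    (SS q (q^3-q) s t (u+1)).ncard = (SS q (q^3-q) s t u).ncard + 1 := by
  obtain ⟨i0, hi0⟩ := FF_surjective (s := s) (t := t) hq (-(u+1))
  have hi0r : -(q^3-q) ≤ i0 := by
    by_contra hcon
    push_neg at hcon
    have := FF_low (s := s) (t := t) hq hs0 ht0 (i := i0) (by omega)
    omega
  have hins : SS q (q^3-q) s t (u+1) = insert i0 (SS q (q^3-q) s t u) := by
    ext i
    simp only [SS, Set.mem_setOf_eq, Set.mem_insert_iff]
    constructor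
    · rintro ⟨h1, h2⟩
      rcases eq_or_lt_of_le h2 with h | h
      · exact Or.inl (FF_injective hq (by rw [hi0, ← h]))
      · exact Or.inr ⟨h1, by omega⟩
    · rintro (h | ⟨h1, h2⟩)
      · subst h
        exact ⟨hi0r, by omega⟩
      · exact ⟨h1, by omega⟩
  rw [hins, Set.ncard_insert_of_notMem _ (SS_finite hq hs1 ht1 _ u)]
  rintro ⟨_, h2⟩
  omega

lemma iter_r (hq : 2 ≤ q) (hs0 : 0 ≤ s) (hs1 : s < q+1) (ht0 : 0 ≤ t) (ht1 : t < q+1)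
    {u : ℤ} (hu : q^3 + q^2 ≤ u) (n : ℕ) :
    (SS q (q^3-q+n) s t u).ncard = (SS q (q^3-q) s t u).ncard + n := by
  induction n with
  | zero => simp
  | succ n ih =>
      rw [show ((n+1 : ℕ) : ℤ) = (n:ℤ)+1 by push_cast; ring]
      rw [show (q^3-q+((n:ℤ)+1)) = (q^3-q+(n:ℤ))+1 by ring]
      rw [step_r hq hs0 hs1 ht0 ht1 (by omega) hu, ih]
      omega

lemma iter_u (hq : 2 ≤ q) (hs0 : 0 ≤ s) (hs1 : s < q+1) (ht0 : 0 ≤ t) (ht1 : t < q+1)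
    (n : ℕ) :
    (SS q (q^3-q) s t (q^3+q^2+n)).ncard = (SS q (q^3-q) s t (q^3+q^2)).ncard + n := by
  induction n with
  | zero => simp
  | succ n ih =>
      rw [show ((n+1 : ℕ) : ℤ) = (n:ℤ)+1 by push_cast; ring]
      rw [show (q^3+q^2+((n:ℤ)+1)) = (q^3+q^2+(n:ℤ))+1 by ring]
      rw [step_u hq hs0 hs1 ht0 ht1 (by omega), ih]
      omega

end Stmt9Aux

/-- For 0 ≤ s,t < q+1, r ≥ q³−q and u ≥ q³+q²,
    #Ω_{r,s,t,u} = #Ω_{q³−q,s,t,q³+q²} + (r − (q³−q)) + (u − (q³+q²)). -/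
theorem stmt_9 (q r s t u : ℤ) (hq : 2 ≤ q)
    (hs0 : 0 ≤ s) (hs1 : s < q + 1) (ht0 : 0 ≤ t) (ht1 : t < q + 1)
    (hr : q ^ 3 - q ≤ r) (hu : q ^ 3 + q ^ 2 ≤ u) :
    ((Omega q r s t u).ncard : ℤ)
      = ((Omega q (q ^ 3 - q) s t (q ^ 3 + q ^ 2)).ncard : ℤ)
        + (r - (q ^ 3 - q)) + (u - (q ^ 3 + q ^ 2)) := by
  open Stmt9Aux in
  obtain ⟨n, hn⟩ := Int.le.dest hr
  obtain ⟨m, hm⟩ := Int.le.dest hu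
  rw [Stmt9Aux.omega_ncard hq, Stmt9Aux.omega_ncard hq]
  rw [← hn, ← hm]
  rw [Stmt9Aux.iter_r hq hs0 hs1 ht0 ht1 (by omega) n]
  rw [Stmt9Aux.iter_u hq hs0 hs1 ht0 ht1 m]
  push_cast
  ring
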